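/- Let (T_n, t_n, a_n) be a Warlimont triple and define v_n by v_n = T_n - (1/n)∑_{s=1}^{n-1} s·v_s·T_{n-s} and b_n by b_n = n·a_n - ∑_{s=1}^{n-1} b_s·a_{n-s}. Then for all n ≥ 1, v_n = ∑_{d | n} (d/n)·t_d·b_{n/d}, where the sum ranges over all positive divisors d of n. -/

import Mathlib

open PowerSeries Finset

/-- The power series `∑_{k≥0} a_k x^{km}`. -/
noncomputable def innerSeries (a : ℕ → ℝ) (m : ℕ) : PowerSeries ℝ :=
  PowerSeries.mk fun j => if m ∣ j then a (j / m) else 0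

/-- The Euler-product identity `∑_{n≥0} T_n x^n = ∏_{m≥1} (∑_{k≥0} a_k x^{km})^{t_m}`,
expressed coefficientwise: the factors with `m > n` do not affect the `n`-th
coefficient, so the infinite product may be truncated at `m = n`. -/
def WarlimontEq (T : ℕ → ℝ) (t : ℕ → ℕ) (a : ℕ → ℝ) : Prop :=
  ∀ n : ℕ, PowerSeries.coeff (R := ℝ) n (PowerSeries.mk T) =
    PowerSeries.coeff (R := ℝ) n (∏ m ∈ Finset.Icc 1 n, (innerSeries a m) ^ (t m))

/-- A Warlimont triple: nonnegative sequences satisfying the Euler-product identity,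
with `T_0 = a_0 = 1`, `a_1 > 0` and the `t_m` nonnegative integers. -/
structure IsWarlimontTriple (T : ℕ → ℝ) (t : ℕ → ℕ) (a : ℕ → ℝ) : Prop where
  hT_nonneg : ∀ n, 0 ≤ T n
  ha_nonneg : ∀ n, 0 ≤ a n
  hT0 : T 0 = 1
  ha0 : a 0 = 1
  ha1 : 0 < a 1
  heq : WarlimontEq T t a

/-! ### Auxiliary machinery: the operator `x · d/dx` on power series -/

noncomputable def xd (P : PowerSeries ℝ) : PowerSeries ℝ :=
  PowerSeries.mk fun n => (n : ℝ) * coeff n P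

lemma coeff_xd (P : PowerSeries ℝ) (n : ℕ) : coeff n (xd P) = (n : ℝ) * coeff n P :=
  coeff_mk _ _

lemma coeff_innerSeries (a : ℕ → ℝ) (m j : ℕ) :
    coeff j (innerSeries a m) = if m ∣ j then a (j / m) else 0 :=
  coeff_mk _ _

lemma xd_one : xd 1 = 0 := by
  ext n
  rw [coeff_xd, coeff_one]
  rcases n with _ | n <;> simp

lemma xd_mul (P Q : PowerSeries ℝ) : xd (P * Q) = xd P * Q + P * xd Q := by
  ext n
  rw [map_add, coeff_xd, coeff_mul, coeff_mul, coeff_mul, Finset.mul_sum,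
    ← Finset.sum_add_distrib]
  refine Finset.sum_congr rfl fun ij hij => ?_
  rw [Finset.HasAntidiagonal.mem_antidiagonal] at hij
  rw [coeff_xd, coeff_xd, ← hij]
  push_cast
  ring

lemma xd_pow_of (P g : PowerSeries ℝ) (h : xd P = g * P) (k : ℕ) :
    xd (P ^ k) = (C (k : ℝ) * g) * P ^ k := by
  induction k with
  | zero => simp [xd_one]
  | succ k ih =>
    rw [pow_succ, xd_mul, ih, h]
    push_cast
    rw [map_add, map_one]
    ring

lemma xd_prod_of {ι : Type} [DecidableEq ι] (s : Finset ι) (P g : ι → PowerSeries ℝ)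
    (h : ∀ i ∈ s, xd (P i) = g i * P i) :
    xd (∏ i ∈ s, P i) = (∑ i ∈ s, g i) * ∏ i ∈ s, P i := by
  induction s using Finset.induction_on with
  | empty => simp [xd_one]
  | insert c s' hni ih =>
    rw [Finset.prod_insert hni, Finset.sum_insert hni, xd_mul,
      h c (Finset.mem_insert_self c s'), ih fun i hi => h i (Finset.mem_insert_of_mem hi)]
    ring

lemma supp_inner (a : ℕ → ℝ) (m j : ℕ) (hj : ¬ m ∣ j) : coeff j (innerSeries a m) = 0 := by
  rw [coeff_innerSeries, if_neg hj]

lemma supp_inner_pow (a : ℕ → ℝ) (m k : ℕ) : ∀ j : ℕ, ¬ m ∣ j →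
    coeff j ((innerSeries a m) ^ k) = 0 := by
  induction k with
  | zero =>
    intro j hj
    rw [pow_zero, coeff_one, if_neg]
    rintro rfl; exact hj (dvd_zero m)
  | succ k ih =>
    intro j hj
    rw [pow_succ, coeff_mul]
    refine Finset.sum_eq_zero fun ij hij => ?_
    rw [Finset.HasAntidiagonal.mem_antidiagonal] at hij
    by_cases hp : m ∣ ij.1
    · have hq : ¬ m ∣ ij.2 := fun hq => hj (hij ▸ Nat.dvd_add hp hq)
      rw [supp_inner a m _ hq, mul_zero]
    · rw [ih _ hp, zero_mul]

/-- The key logarithmic-derivative identity for a single inner series. -/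
lemma xd_inner (a b : ℕ → ℝ)
    (hconv : ∀ k : ℕ, 1 ≤ k → ∑ s ∈ Finset.Icc 1 k, b s * a (k - s) = (k : ℝ) * a k)
    (m : ℕ) (hm : 1 ≤ m) :
    xd (innerSeries a m) =
      (C (m : ℝ) * innerSeries (fun j => if j = 0 then 0 else b j) m) * innerSeries a m := by
  set b' : ℕ → ℝ := fun j => if j = 0 then 0 else b j with hb'
  have hm0 : 0 < m := hm
  ext n
  rw [coeff_xd, mul_assoc, coeff_C_mul, coeff_mul]
  by_cases hd : m ∣ n
  · obtain ⟨k, rfl⟩ := hd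
    rw [Finset.Nat.sum_antidiagonal_eq_sum_range_succ_mk]
    have hsum : ∑ p ∈ Finset.range (m * k + 1),
        coeff p (innerSeries b' m) * coeff (m * k - p) (innerSeries a m)
        = ∑ i ∈ Finset.range (k + 1), b' i * a (k - i) := by
      rw [← Finset.sum_filter_of_ne (p := fun p => m ∣ p)
        (fun x _ hx => by
          by_contra hmx
          exact hx (by rw [supp_inner b' m x hmx, zero_mul]))]
      refine Finset.sum_bij' (fun p _ => p / m) (fun i _ => m * i) ?_ ?_ ?_ ?_ ?_
      · intro p hp
        simp only [Finset.mem_filter, Finset.mem_range] at hp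
        obtain ⟨i, rfl⟩ := hp.2
        show m * i / m ∈ Finset.range (k + 1)
        rw [Finset.mem_range, Nat.mul_div_cancel_left i hm0]
        have h1 := hp.1
        by_contra hik
        push_neg at hik
        have h2 : m * (k + 1) ≤ m * i := mul_le_mul_right hik m
        have h3 : m * (k + 1) = m * k + m := by ring
        omega
      · intro i hi
        rw [Finset.mem_range] at hi
        show m * i ∈ Finset.filter (fun x => m ∣ x) (Finset.range (m * k + 1))
        rw [Finset.mem_filter, Finset.mem_range]
        have h2 : m * i ≤ m * k := mul_le_mul_right (Nat.lt_succ_iff.mp hi) m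
        exact ⟨by omega, ⟨i, rfl⟩⟩
      · intro p hp
        simp only [Finset.mem_filter] at hp
        exact Nat.mul_div_cancel' hp.2
      · intro i _
        exact Nat.mul_div_cancel_left i hm0
      · intro p hp
        simp only [Finset.mem_filter, Finset.mem_range] at hp
        obtain ⟨i, rfl⟩ := hp.2
        show coeff (m * i) (innerSeries b' m) * coeff (m * k - m * i) (innerSeries a m)
          = b' (m * i / m) * a (k - m * i / m)
        rw [Nat.mul_div_cancel_left i hm0]
        have h1 : m * k - m * i = m * (k - i) := by rw [Nat.mul_sub]
        rw [h1, coeff_innerSeries, coeff_innerSeries, if_pos ⟨i, rfl⟩,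
          if_pos ⟨k - i, rfl⟩, Nat.mul_div_cancel_left i hm0, Nat.mul_div_cancel_left (k-i) hm0]
    rw [hsum]
    have hsum2 : ∑ i ∈ Finset.range (k + 1), b' i * a (k - i)
        = ∑ i ∈ Finset.Icc 1 k, b i * a (k - i) := by
      have hss : Finset.Icc 1 k ⊆ Finset.range (k + 1) := by
        intro i hi
        rw [Finset.mem_Icc] at hi
        rw [Finset.mem_range]
        omega
      rw [← Finset.sum_subset hss (fun i hi1 hi2 => ?_)]
      · refine Finset.sum_congr rfl fun i hi => ?_
        rw [Finset.mem_Icc] at hi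
        have hi0 : i ≠ 0 := by omega
        simp [hb', hi0]
      · rw [Finset.mem_range] at hi1
        rw [Finset.mem_Icc] at hi2
        have hi0 : i = 0 := by omega
        simp [hb', hi0]
    rw [hsum2]
    rcases Nat.eq_zero_or_pos k with rfl | hk
    · simp
    · rw [hconv k hk, coeff_innerSeries, if_pos ⟨k, rfl⟩, Nat.mul_div_cancel_left k hm0]
      push_cast
      ring
  · rw [supp_inner a m n hd, mul_zero]
    rw [Finset.sum_eq_zero, mul_zero]
    intro ij hij
    rw [Finset.HasAntidiagonal.mem_antidiagonal] at hij
    by_cases hp : m ∣ ij.1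
    · have hq : ¬ m ∣ ij.2 := fun hq => hd (hij ▸ Nat.dvd_add hp hq)
      rw [supp_inner a m _ hq, mul_zero]
    · rw [supp_inner b' m _ hp, zero_mul]

/-- Multiplying by a power of `innerSeries a m` does not change coefficients below `m`. -/
lemma trunc_stable (a : ℕ → ℝ) (ha0 : a 0 = 1) (P : PowerSeries ℝ) (m k n : ℕ) (hnm : n < m) :
    coeff n (P * (innerSeries a m) ^ k) = coeff n P := by
  rw [coeff_mul]
  rw [Finset.sum_eq_single (n, 0)]
  · have hc : coeff 0 ((innerSeries a m) ^ k) = 1 := by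
      rw [coeff_zero_eq_constantCoeff, map_pow]
      have hc0 : constantCoeff (innerSeries a m) = 1 := by
        rw [← coeff_zero_eq_constantCoeff, coeff_innerSeries, if_pos (dvd_zero m),
          Nat.zero_div, ha0]
      rw [hc0, one_pow]
    rw [hc, mul_one]
  · intro ij hij hne
    rw [Finset.HasAntidiagonal.mem_antidiagonal] at hij
    have h2 : ij.2 ≠ 0 := by
      intro h0
      apply hne
      have h1 : ij.1 = n := by omega
      exact Prod.ext h1 h0
    have hnd : ¬ m ∣ ij.2 := by
      intro hdvd
      have := Nat.le_of_dvd (Nat.pos_of_ne_zero h2) hdvd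
      omega
    rw [supp_inner_pow a m k ij.2 hnd, mul_zero]
  · intro hns
    exact absurd (Finset.HasAntidiagonal.mem_antidiagonal.mpr (by omega)) hns

/-- The truncated products all have the right coefficients. -/
lemma coeff_prod_T (T : ℕ → ℝ) (t : ℕ → ℕ) (a : ℕ → ℝ) (h : WarlimontEq T t a)
    (ha0 : a 0 = 1) :
    ∀ N n : ℕ, n ≤ N →
      coeff n (∏ m ∈ Finset.Icc 1 N, (innerSeries a m) ^ (t m)) = T n := by
  intro N
  induction N with
  | zero =>
    intro n hn
    have hn0 : n = 0 := by omega
    subst hn0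
    rw [← h 0, coeff_mk]
  | succ N ih =>
    intro n hn
    rcases Nat.lt_or_ge n (N + 1) with hlt | hge
    · rw [Finset.prod_Icc_succ_top (by omega : 1 ≤ N + 1),
        trunc_stable a ha0 _ _ _ _ hlt, ih n (by omega)]
    · have hn' : n = N + 1 := by omega
      subst hn'
      rw [← h (N + 1), coeff_mk]

lemma key_identity (T : ℕ → ℝ) (t : ℕ → ℕ) (a b : ℕ → ℝ) (h : WarlimontEq T t a)
    (ha0 : a 0 = 1)
    (hconv : ∀ k : ℕ, 1 ≤ k → ∑ s ∈ Finset.Icc 1 k, b s * a (k - s) = (k : ℝ) * a k)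
    (N : ℕ) :
    (N : ℝ) * T N = ∑ s ∈ Finset.Icc 1 N,
      (∑ d ∈ s.divisors, (d : ℝ) * (t d : ℝ) * b (s / d)) * T (N - s) := by
  classical
  set b' : ℕ → ℝ := fun j => if j = 0 then 0 else b j with hb'
  set G : PowerSeries ℝ :=
    ∑ m ∈ Finset.Icc 1 N, C ((m : ℝ) * (t m : ℝ)) * innerSeries b' m with hG
  have hxd : xd (∏ m ∈ Finset.Icc 1 N, (innerSeries a m) ^ (t m)) =
      G * ∏ m ∈ Finset.Icc 1 N, (innerSeries a m) ^ (t m) := by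
    rw [hG]
    refine xd_prod_of _ _ _ fun m hm => ?_
    rw [Finset.mem_Icc] at hm
    rw [xd_pow_of _ _ (xd_inner a b hconv m hm.1) (t m)]
    congr 1
    rw [← mul_assoc, ← map_mul, mul_comm ((t m : ℝ)) _]
  have hc := congrArg (coeff N) hxd
  rw [coeff_xd, coeff_prod_T T t a h ha0 N N le_rfl, coeff_mul] at hc
  rw [hc]
  have hcoeffG : ∀ p : ℕ, p ≤ N → coeff p G =
      ∑ d ∈ p.divisors, (d : ℝ) * (t d : ℝ) * b (p / d) := by
    intro p hp
    rw [hG, map_sum]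
    rcases Nat.eq_zero_or_pos p with rfl | hp1
    · rw [Nat.divisors_zero, Finset.sum_empty]
      refine Finset.sum_eq_zero fun m hm => ?_
      rw [coeff_C_mul, coeff_innerSeries, if_pos (dvd_zero m), Nat.zero_div]
      simp [hb']
    · have hsub : p.divisors ⊆ Finset.Icc 1 N := by
        intro d hd
        rw [Nat.mem_divisors] at hd
        rw [Finset.mem_Icc]
        exact ⟨Nat.pos_of_dvd_of_pos hd.1 hp1, le_trans (Nat.le_of_dvd hp1 hd.1) hp⟩
      rw [← Finset.sum_subset hsub (fun m hm1 hm2 => ?_)]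
      · refine Finset.sum_congr rfl fun d hd => ?_
        rw [Nat.mem_divisors] at hd
        rw [coeff_C_mul, coeff_innerSeries, if_pos hd.1]
        have hnz : p / d ≠ 0 := by
          have hd1 : 0 < d := Nat.pos_of_dvd_of_pos hd.1 hp1
          have := Nat.div_pos (Nat.le_of_dvd hp1 hd.1) hd1
          omega
        simp only [hb']
        rw [if_neg hnz]
      · rw [Nat.mem_divisors] at hm2
        rw [Finset.mem_Icc] at hm1
        have hnd : ¬ m ∣ p := fun hdvd => hm2 ⟨hdvd, by omega⟩
        rw [coeff_C_mul, coeff_innerSeries, if_neg hnd, mul_zero]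
  rw [Finset.Nat.sum_antidiagonal_eq_sum_range_succ_mk]
  have hrange : ∀ s ∈ Finset.range (N + 1),
      coeff s G * coeff (N - s) (∏ m ∈ Finset.Icc 1 N, (innerSeries a m) ^ (t m))
      = (∑ d ∈ s.divisors, (d : ℝ) * (t d : ℝ) * b (s / d)) * T (N - s) := by
    intro s hs
    rw [Finset.mem_range] at hs
    rw [hcoeffG s (by omega), coeff_prod_T T t a h ha0 N (N - s) (by omega)]
  rw [Finset.sum_congr rfl hrange]
  have hss : Finset.Icc 1 N ⊆ Finset.range (N + 1) := by
    intro i hi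
    rw [Finset.mem_Icc] at hi
    rw [Finset.mem_range]
    omega
  rw [← Finset.sum_subset hss (fun i hi1 hi2 => ?_)]
  rw [Finset.mem_range] at hi1
  rw [Finset.mem_Icc] at hi2
  have hi0 : i = 0 := by omega
  subst hi0
  rw [Nat.divisors_zero, Finset.sum_empty, zero_mul]

theorem warlimont_v_divisor_sum (T : ℕ → ℝ) (t : ℕ → ℕ) (a : ℕ → ℝ) (v b : ℕ → ℝ)
    (h : IsWarlimontTriple T t a)
    (hv : ∀ n : ℕ, 1 ≤ n →
      v n = T n - (1 / (n : ℝ)) * ∑ s ∈ Finset.Icc 1 (n - 1), (s : ℝ) * v s * T (n - s))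
    (hb : ∀ n : ℕ, 1 ≤ n →
      b n = (n : ℝ) * a n - ∑ s ∈ Finset.Icc 1 (n - 1), b s * a (n - s)) :
    ∀ n : ℕ, 1 ≤ n →
      v n = ∑ d ∈ n.divisors, ((d : ℝ) / n) * (t d : ℝ) * b (n / d) := by
  have hT0 := h.hT0
  have ha0 := h.ha0
  have hconv : ∀ k : ℕ, 1 ≤ k → ∑ s ∈ Finset.Icc 1 k, b s * a (k - s) = (k : ℝ) * a k := by
    intro k hk
    obtain ⟨k', rfl⟩ : ∃ k'', k = k'' + 1 := ⟨k - 1, by omega⟩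
    rw [Finset.sum_Icc_succ_top (by omega : 1 ≤ k' + 1)]
    have hbk := hb (k' + 1) (by omega)
    simp only [Nat.add_sub_cancel] at hbk
    rw [Nat.sub_self, ha0, mul_one, hbk]
    ring
  intro n
  induction n using Nat.strong_induction_on with
  | _ n ih =>
    intro hn
    obtain ⟨n', rfl⟩ : ∃ n'', n = n'' + 1 := ⟨n - 1, by omega⟩
    have hkey := key_identity T t a b h.heq ha0 hconv (n' + 1)
    rw [Finset.sum_Icc_succ_top (by omega : 1 ≤ n' + 1), Nat.sub_self, hT0, mul_one] at hkey
    have hvn := hv (n' + 1) (by omega)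
    simp only [Nat.add_sub_cancel] at hvn
    have hsum : ∀ s ∈ Finset.Icc 1 n', (s : ℝ) * v s * T (n' + 1 - s)
        = (∑ d ∈ s.divisors, (d : ℝ) * (t d : ℝ) * b (s / d)) * T (n' + 1 - s) := by
      intro s hs
      rw [Finset.mem_Icc] at hs
      rw [ih s (by omega) hs.1]
      congr 1
      rw [Finset.mul_sum]
      refine Finset.sum_congr rfl fun d hd => ?_
      have hs0 : (s : ℝ) ≠ 0 := Nat.cast_ne_zero.mpr (by omega)
      field_simp
    rw [Finset.sum_congr rfl hsum] at hvn
    have hN0 : ((n' + 1 : ℕ) : ℝ) ≠ 0 := Nat.cast_ne_zero.mpr (by omega)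
    have htarget : ∑ d ∈ (n' + 1).divisors,
          ((d : ℝ) / ((n' + 1 : ℕ) : ℝ)) * (t d : ℝ) * b ((n' + 1) / d)
        = (1 / ((n' + 1 : ℕ) : ℝ)) *
          ∑ d ∈ (n' + 1).divisors, (d : ℝ) * (t d : ℝ) * b ((n' + 1) / d) := by
      rw [Finset.mul_sum]
      refine Finset.sum_congr rfl fun d hd => ?_
      field_simp
    have hrw : ∑ s ∈ Finset.Icc 1 n',
          (∑ d ∈ s.divisors, (d : ℝ) * (t d : ℝ) * b (s / d)) * T (n' + 1 - s)
        = ((n' + 1 : ℕ) : ℝ) * T (n' + 1)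
          - ∑ d ∈ (n' + 1).divisors, (d : ℝ) * (t d : ℝ) * b ((n' + 1) / d) := by
      linarith [hkey]
    rw [hvn, hrw]
    push_cast
    push_cast at htarget hN0
    rw [htarget]
    field_simp
    ring
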